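/- Let s ∈ (0,1) and τ > 0. On the open upper half-plane {x₂ > 0}, the function w_{0,s}^{1+τ} where w_{0,s}(x₁,x₂) = (√(x₁²+x₂²)+x₁)^s satisfies L_s(w_{0,s}^{1+τ}) = 2 s² τ(1+τ) x₂^{1−2s} (x₁²+x₂²)^{−1/2} w_{0,s}^{1 − 1/s + τ}, where L_s u = ∂₁(x₂^{1−2s}∂₁u) + ∂₂(x₂^{1−2s}∂₂u). -/

import Mathlib

open Real


lemma base_nonneg (a b : ℝ) : 0 ≤ Real.sqrt (a^2+b^2) + a := by
  have h : |a| ≤ Real.sqrt (a^2+b^2) := by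
    rw [← Real.sqrt_sq_eq_abs]
    exact Real.sqrt_le_sqrt (by nlinarith [sq_nonneg b])
  have := neg_abs_le a
  linarith

lemma base_pos (a b : ℝ) (hb : b ≠ 0) : 0 < Real.sqrt (a^2+b^2) + a := by
  have h : |a| < Real.sqrt (a^2+b^2) := by
    rw [← Real.sqrt_sq_eq_abs]
    exact Real.sqrt_lt_sqrt (sq_nonneg a) (by nlinarith [sq_nonneg b, (by positivity : (0:ℝ) < b^2)])
  have := neg_abs_le a
  linarith

lemma lemR (b t : ℝ) (hb : b ≠ 0) :
    HasDerivAt (fun a => Real.sqrt (a^2+b^2)) (2*t/(2*Real.sqrt (t^2+b^2))) t := by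
  have h0 : HasDerivAt (fun a : ℝ => a^2) (2*t) t := by simpa using hasDerivAt_pow 2 t
  exact (h0.add_const (b^2)).sqrt (by positivity)

lemma lemRb (a t : ℝ) (ht : t ≠ 0) :
    HasDerivAt (fun b => Real.sqrt (a^2+b^2)) (2*t/(2*Real.sqrt (a^2+t^2))) t := by
  have h0 : HasDerivAt (fun b : ℝ => b^2) (2*t) t := by simpa using hasDerivAt_pow 2 t
  exact (h0.const_add (a^2)).sqrt (by positivity)

lemma lemA (α b t : ℝ) (hb : b ≠ 0) :
    HasDerivAt (fun a => (Real.sqrt (a^2+b^2)+a) ^ α)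
      (α * (Real.sqrt (t^2+b^2)+t) ^ α / Real.sqrt (t^2+b^2)) t := by
  have hr : 0 < Real.sqrt (t^2+b^2) := Real.sqrt_pos.mpr (by positivity)
  have hbase : 0 < Real.sqrt (t^2+b^2) + t := base_pos t b hb
  have h3 : HasDerivAt (fun a => Real.sqrt (a^2+b^2) + a)
      (2*t/(2*Real.sqrt (t^2+b^2)) + 1) t := (lemR b t hb).add (hasDerivAt_id' (x := t))
  have h4 := h3.rpow_const (p := α) (Or.inl hbase.ne')
  convert h4 using 1
  have hb1 : (Real.sqrt (t^2+b^2)+t) ^ (α-1) * (Real.sqrt (t^2+b^2)+t)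
      = (Real.sqrt (t^2+b^2)+t) ^ α := by
    rw [← Real.rpow_add_one hbase.ne' (α-1)]
    congr 1; ring
  rw [← hb1]
  field_simp
  ring

lemma lemB (α a t : ℝ) (ht : 0 < t) :
    HasDerivAt (fun b => (Real.sqrt (a^2+b^2)+a) ^ α)
      (α * (Real.sqrt (a^2+t^2)+a) ^ (α-1) * (t / Real.sqrt (a^2+t^2))) t := by
  have hr : 0 < Real.sqrt (a^2+t^2) := Real.sqrt_pos.mpr (by positivity)
  have hbase : 0 < Real.sqrt (a^2+t^2) + a := base_pos a t ht.ne'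
  have h3 : HasDerivAt (fun b => Real.sqrt (a^2+b^2) + a)
      (2*t/(2*Real.sqrt (a^2+t^2))) t := (lemRb a t ht.ne').add_const a
  have h4 := h3.rpow_const (p := α) (Or.inl hbase.ne')
  convert h4 using 1
  field_simp

/-- The `s`-homogeneous model function `w_{0,s}`. -/
noncomputable def w0 (s x₁ x₂ : ℝ) : ℝ :=
  (Real.sqrt (x₁ ^ 2 + x₂ ^ 2) + x₁) ^ s

/-- The barrier computation:
`L_s(w_{0,s}^{1+τ}) = 2 s² τ(1+τ) x₂^{1-2s} (x₁²+x₂²)^{-1/2} w_{0,s}^{1-1/s+τ}`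
on the open upper half-plane. -/
theorem stmt4 (s τ : ℝ) (hs : s ∈ Set.Ioo (0 : ℝ) 1) (hτ : 0 < τ)
    (x₁ x₂ : ℝ) (hx₂ : 0 < x₂) :
    deriv (fun t => x₂ ^ (1 - 2 * s) * deriv (fun a => w0 s a x₂ ^ (1 + τ)) t) x₁
      + deriv (fun t => t ^ (1 - 2 * s) * deriv (fun b => w0 s x₁ b ^ (1 + τ)) t) x₂
      = 2 * s ^ 2 * τ * (1 + τ) * x₂ ^ (1 - 2 * s) *
          (x₁ ^ 2 + x₂ ^ 2) ^ (-(1 : ℝ) / 2) * (w0 s x₁ x₂) ^ (1 - 1 / s + τ) := by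
  obtain ⟨hs0, hs1⟩ := hs
  set α := s * (1 + τ) with hα
  have hw : ∀ a b : ℝ, w0 s a b ^ (1 + τ) = (Real.sqrt (a^2+b^2)+a) ^ α := by
    intro a b
    rw [w0, ← Real.rpow_mul (base_nonneg a b)]
  simp only [hw]
  have hr0 : 0 < Real.sqrt (x₁^2+x₂^2) := Real.sqrt_pos.mpr (by positivity)
  have hbase : 0 < Real.sqrt (x₁^2+x₂^2) + x₁ := base_pos x₁ x₂ hx₂.ne'
  -- first term
  have hderiv1 : (fun t => x₂ ^ (1 - 2*s) * deriv (fun a => (Real.sqrt (a^2+x₂^2)+a) ^ α) t)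
      = (fun t => (x₂ ^ (1-2*s) * α) * ((Real.sqrt (t^2+x₂^2)+t) ^ α * (Real.sqrt (t^2+x₂^2))⁻¹)) := by
    funext t
    rw [(lemA α x₂ t hx₂.ne').deriv]
    ring
  have hRinv : HasDerivAt (fun t => (Real.sqrt (t^2+x₂^2))⁻¹)
      (-(2*x₁/(2*Real.sqrt (x₁^2+x₂^2))) / (Real.sqrt (x₁^2+x₂^2))^2) x₁ :=
    (lemR x₂ x₁ hx₂.ne').inv hr0.ne'
  have key1 := (((lemA α x₂ x₁ hx₂.ne').mul hRinv).const_mul (x₂ ^ (1-2*s) * α)).deriv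
  simp only [Pi.mul_def] at key1
  rw [hderiv1, key1]
  -- second term
  have hev : (fun t => t ^ (1 - 2*s) * deriv (fun b => (Real.sqrt (x₁^2+b^2)+x₁) ^ α) t)
      =ᶠ[nhds x₂] (fun t => t ^ (1-2*s) *
        (α * ((Real.sqrt (x₁^2+t^2)+x₁) ^ (α-1) * (t / Real.sqrt (x₁^2+t^2))))) := by
    filter_upwards [Ioi_mem_nhds hx₂] with t ht
    rw [(lemB α x₁ t ht).deriv]
    ring
  rw [hev.deriv_eq]
  have hp : HasDerivAt (fun t : ℝ => t ^ (1-2*s)) ((1-2*s) * x₂ ^ (1-2*s-1)) x₂ :=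
    Real.hasDerivAt_rpow_const (Or.inl hx₂.ne')
  have hq := lemB (α-1) x₁ x₂ hx₂
  have hc : HasDerivAt (fun t => t / Real.sqrt (x₁^2+t^2))
      ((1 * Real.sqrt (x₁^2+x₂^2) - x₂ * (2*x₂/(2*Real.sqrt (x₁^2+x₂^2)))) / (Real.sqrt (x₁^2+x₂^2))^2) x₂ :=
    (hasDerivAt_id' (x := x₂)).div (lemRb x₁ x₂ hx₂.ne') hr0.ne'
  have key2 := (hp.mul ((hq.mul hc).const_mul α)).deriv
  simp only [Pi.mul_def] at key2
  rw [key2]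
  -- rewrite the RHS
  have hrw1 : (x₁^2+x₂^2 : ℝ) ^ (-(1:ℝ)/2) = (Real.sqrt (x₁^2+x₂^2))⁻¹ := by
    rw [neg_div, Real.rpow_neg (by positivity), ← Real.rpow_natCast, Real.sqrt_eq_rpow]
  have hrw2 : w0 s x₁ x₂ ^ (1 - 1/s + τ) = (Real.sqrt (x₁^2+x₂^2)+x₁) ^ (α-1) := by
    rw [w0, ← Real.rpow_mul (base_nonneg x₁ x₂)]
    congr 1
    field_simp
    ring
  rw [hrw1, hrw2]
  -- final algebra
  set r := Real.sqrt (x₁^2+x₂^2) with hrdef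
  have hr2 : r^2 = x₁^2+x₂^2 := Real.sq_sqrt (by positivity)
  have e3 : (r+x₁) ^ α = (r+x₁) ^ (α-1) * (r+x₁) := by
    rw [← Real.rpow_add_one hbase.ne' (α-1)]; congr 1; ring
  have e4 : (r+x₁) ^ (α-1-1) = (r+x₁) ^ (α-1) / (r+x₁) := by
    rw [Real.rpow_sub hbase, Real.rpow_one]
  have e5 : x₂ ^ (1-2*s-1) = x₂ ^ (1-2*s) / x₂ := by
    rw [Real.rpow_sub hx₂, Real.rpow_one]
  rw [e3, e4, e5]
  set P := (r+x₁) ^ (α-1) with hP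
  set X := x₂ ^ (1-2*s) with hX
  rw [hα]
  field_simp
  linear_combination (X * P * (r * (2 - s - s * τ) + x₁)) * hr2
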